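/- arXiv:1901.01440 — 3 statements merged into one kernel-verified Lean document; each statement's English description precedes it below -/
import Mathlib

section
/- Let f ∈ L^p[0,1] with 1 ≤ p < ∞, and define f^♮_p(x) = 2^{k/p} f(2^k(x - 2^{-k})) for x ∈ (2^{-k}, 2^{-k+1}], k ∈ ℕ. Then for every t > 0, the distribution function Λ_{f^♮_p}(t) = |{x ∈ [0,1] : |f^♮_p(x)| > t}| satisfies Λ_{f^♮_p}(t) ≤ C_p t^{-p} ‖f‖_p^p with C_p = 2/(p(2^{1/p} - 1)). -/
open MeasureTheory Set
open scoped ENNReal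


lemma aux_geom (a : ℝ≥0∞) (cond : ℕ → Prop) [DecidablePred cond]
    (hmono : ∀ k, cond k → ((2:ℝ≥0∞)⁻¹) ^ (k + 1) < a) :
    (∑' k : ℕ, if cond k then ((2:ℝ≥0∞)⁻¹) ^ (k + 1) else 0) ≤ 2 * a := by
  by_cases h : ∃ k, cond k
  · obtain ⟨k0, hk0spec, hk0min⟩ : ∃ k0, cond k0 ∧ ∀ j, cond j → k0 ≤ j :=
      ⟨Nat.find h, Nat.find_spec h, fun j hj => Nat.find_min' h hj⟩
    have hstep : ∀ k, (if cond k then ((2:ℝ≥0∞)⁻¹) ^ (k + 1) else 0)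
        ≤ (if k0 ≤ k then ((2:ℝ≥0∞)⁻¹) ^ (k + 1) else 0) := by
      intro k
      split_ifs with h1 h2
      · exact le_rfl
      · exact absurd (hk0min _ h1) h2
      · exact zero_le
      · exact le_rfl
    have hsum : (∑' k : ℕ, if k0 ≤ k then ((2:ℝ≥0∞)⁻¹) ^ (k + 1) else 0)
        = ((2:ℝ≥0∞)⁻¹) ^ (k0 + 1) * 2 := by
      have hbij : (∑' k : ℕ, if k0 ≤ k then ((2:ℝ≥0∞)⁻¹) ^ (k + 1) else 0)
          = ∑' j : ℕ, ((2:ℝ≥0∞)⁻¹) ^ (j + k0 + 1) := by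
        apply tsum_eq_tsum_of_ne_zero_bij (fun x => x.1 + k0)
        · intro x y hxy
          simp only at hxy
          exact Subtype.ext (by omega)
        · intro k hk
          have hk0le : k0 ≤ k := by
            by_contra hcon
            exact hk (if_neg hcon)
          refine ⟨⟨k - k0, ?_⟩, by simp; omega⟩
          simp only [Function.mem_support]
          exact pow_ne_zero _ (ENNReal.inv_ne_zero.mpr ENNReal.ofNat_ne_top)
        · intro x
          rw [if_pos (Nat.le_add_left k0 x)]
      rw [hbij]
      calc (∑' j : ℕ, ((2:ℝ≥0∞)⁻¹) ^ (j + k0 + 1))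
          = ∑' i : ℕ, ((2:ℝ≥0∞)⁻¹) ^ (k0 + 1) * ((2:ℝ≥0∞)⁻¹) ^ i := by
            refine tsum_congr fun i => ?_
            rw [show i + k0 + 1 = (k0 + 1) + i by ring, pow_add]
        _ = ((2:ℝ≥0∞)⁻¹) ^ (k0 + 1) * ∑' i : ℕ, ((2:ℝ≥0∞)⁻¹) ^ i := ENNReal.tsum_mul_left
        _ = ((2:ℝ≥0∞)⁻¹) ^ (k0 + 1) * 2 := by
            rw [ENNReal.tsum_geometric, ENNReal.one_sub_inv_two, inv_inv]
    calc (∑' k : ℕ, if cond k then ((2:ℝ≥0∞)⁻¹) ^ (k + 1) else 0)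
        ≤ (∑' k : ℕ, if k0 ≤ k then ((2:ℝ≥0∞)⁻¹) ^ (k + 1) else 0) := ENNReal.tsum_le_tsum hstep
      _ = ((2:ℝ≥0∞)⁻¹) ^ (k0 + 1) * 2 := hsum
      _ ≤ a * 2 := mul_le_mul_left (le_of_lt (hmono k0 hk0spec)) 2
      _ = 2 * a := mul_comm _ _
  · push_neg at h
    have hz : ∀ k : ℕ, (if cond k then ((2:ℝ≥0∞)⁻¹) ^ (k + 1) else 0) = 0 :=
      fun k => if_neg (h k)
    calc (∑' k : ℕ, if cond k then ((2:ℝ≥0∞)⁻¹) ^ (k + 1) else 0)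
        = ∑' _ : ℕ, (0:ℝ≥0∞) := tsum_congr hz
      _ = 0 := tsum_zero
      _ ≤ 2 * a := zero_le

lemma aux_pt (p t : ℝ) (hp : 1 ≤ p) (ht : 0 < t) (f : ℝ → ℝ)
    (hofReal : ∀ k : ℕ, ENNReal.ofReal ((2:ℝ) ^ (-((k : ℝ) + 1))) = ((2:ℝ≥0∞)⁻¹) ^ (k + 1))
    (y : ℝ) :
    (∑' k : ℕ, ({y' | t < (2:ℝ) ^ (((k:ℝ) + 1) / p) * |f y'|}).indicator
          (fun _ => ENNReal.ofReal ((2:ℝ) ^ (-((k:ℝ) + 1)))) y)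
      ≤ ENNReal.ofReal (2 * (t ^ (-p) * |f y| ^ p)) := by
  classical
  have hp0 : (0:ℝ) < p := by linarith
  set a : ℝ≥0∞ := ENNReal.ofReal (t ^ (-p) * |f y| ^ p) with ha
  have hmono : ∀ k : ℕ, (t < (2:ℝ) ^ (((k:ℝ) + 1) / p) * |f y|) →
      ((2:ℝ≥0∞)⁻¹) ^ (k + 1) < a := by
    intro k hk
    have hcpos : (0:ℝ) < (2:ℝ) ^ (((k:ℝ) + 1) / p) := Real.rpow_pos_of_pos (by norm_num) _
    have h1 : t * (2:ℝ) ^ (-((k:ℝ) + 1) / p) < |f y| := by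
      rw [show -((k:ℝ)+1)/p = -(((k:ℝ)+1)/p) by ring, Real.rpow_neg (by norm_num)]
      rw [← div_eq_mul_inv, div_lt_iff₀ hcpos, mul_comm]
      exact hk
    have hbpos : (0:ℝ) < t * (2:ℝ) ^ (-((k:ℝ) + 1) / p) :=
      mul_pos ht (Real.rpow_pos_of_pos (by norm_num) _)
    have h2 : (t * (2:ℝ) ^ (-((k:ℝ) + 1) / p)) ^ p < |f y| ^ p :=
      Real.rpow_lt_rpow hbpos.le h1 hp0
    have h3 : (t * (2:ℝ) ^ (-((k:ℝ) + 1) / p)) ^ p = t ^ p * (2:ℝ) ^ (-((k:ℝ) + 1)) := by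
      rw [Real.mul_rpow ht.le (Real.rpow_pos_of_pos (by norm_num) _).le,
        ← Real.rpow_mul (by norm_num : (0:ℝ) ≤ 2), div_mul_cancel₀ _ hp0.ne']
    rw [h3] at h2
    have h4 : (2:ℝ) ^ (-((k:ℝ) + 1)) < t ^ (-p) * |f y| ^ p := by
      have h5 := mul_lt_mul_of_pos_left h2 (Real.rpow_pos_of_pos ht (-p))
      calc (2:ℝ) ^ (-((k:ℝ) + 1))
          = t ^ (-p) * (t ^ p * (2:ℝ) ^ (-((k:ℝ) + 1))) := by
            rw [← mul_assoc, ← Real.rpow_add ht, neg_add_cancel, Real.rpow_zero, one_mul]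
        _ < t ^ (-p) * |f y| ^ p := h5
    rw [← hofReal k, ha]
    exact (ENNReal.ofReal_lt_ofReal_iff
      (lt_trans (Real.rpow_pos_of_pos (by norm_num) _) h4)).mpr h4
  calc (∑' k : ℕ, ({y' | t < (2:ℝ) ^ (((k:ℝ) + 1) / p) * |f y'|}).indicator
          (fun _ => ENNReal.ofReal ((2:ℝ) ^ (-((k:ℝ) + 1)))) y)
      = ∑' k : ℕ, (if (t < (2:ℝ) ^ (((k:ℝ) + 1) / p) * |f y|) then ((2:ℝ≥0∞)⁻¹) ^ (k + 1) else 0) := by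
        refine tsum_congr fun k => ?_
        rw [Set.indicator_apply, hofReal k]
        rfl
    _ ≤ 2 * a := aux_geom a _ hmono
    _ = ENNReal.ofReal (2 * (t ^ (-p) * |f y| ^ p)) := by
        rw [ENNReal.ofReal_mul (by norm_num), ENNReal.ofReal_ofNat]

lemma aux_uvol (S : ℕ → Set ℝ) (hS : ∀ k, MeasurableSet (S k)) (k : ℕ) :
    volume ((fun x => (2:ℝ) ^ ((k:ℝ) + 1) * (x - (2:ℝ) ^ (-((k:ℝ) + 1)))) ⁻¹' (Ioc 0 1 ∩ S k))
      = ENNReal.ofReal ((2:ℝ) ^ (-((k:ℝ) + 1))) * volume (Ioc 0 1 ∩ S k) := by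
  have hA : (0:ℝ) < (2:ℝ) ^ ((k:ℝ) + 1) := Real.rpow_pos_of_pos (by norm_num) _
  have hAB : (2:ℝ) ^ ((k:ℝ) + 1) * (2:ℝ) ^ (-((k:ℝ) + 1)) = 1 := by
    rw [← Real.rpow_add (by norm_num : (0:ℝ) < 2), add_neg_cancel, Real.rpow_zero]
  have hcomp : (fun x => (2:ℝ) ^ ((k:ℝ) + 1) * (x - (2:ℝ) ^ (-((k:ℝ) + 1)))) ⁻¹' (Ioc 0 1 ∩ S k)
      = (fun x : ℝ => (2:ℝ) ^ ((k:ℝ) + 1) * x) ⁻¹'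
        ((fun x : ℝ => x + (-1)) ⁻¹' (Ioc 0 1 ∩ S k)) := by
    have hfun : (fun x => (2:ℝ) ^ ((k:ℝ) + 1) * (x - (2:ℝ) ^ (-((k:ℝ) + 1))))
        = (fun x : ℝ => x + (-1)) ∘ (fun x : ℝ => (2:ℝ) ^ ((k:ℝ) + 1) * x) := by
      funext x
      show (2:ℝ) ^ ((k:ℝ) + 1) * (x - (2:ℝ) ^ (-((k:ℝ) + 1))) = (2:ℝ) ^ ((k:ℝ) + 1) * x + (-1)
      rw [mul_sub, hAB]
      ring
    rw [hfun, Set.preimage_comp]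
  rw [hcomp, Real.volume_preimage_mul_left hA.ne' _, measure_preimage_add_right volume (-1) _]
  congr 1
  rw [abs_of_pos (by positivity), ← Real.rpow_neg_one, ← Real.rpow_mul (by norm_num : (0:ℝ) ≤ 2)]
  ring_nf

lemma aux_cover (p t : ℝ) (hp : 1 ≤ p) (ht : 0 < t) (f g : ℝ → ℝ)
    (hg : ∀ k : ℕ, 1 ≤ k → ∀ x ∈ Set.Ioc ((2 : ℝ) ^ (-(k : ℝ))) ((2 : ℝ) ^ (-(k : ℝ) + 1)),
      g x = (2 : ℝ) ^ ((k : ℝ) / p) * f ((2 : ℝ) ^ (k : ℝ) * (x - (2 : ℝ) ^ (-(k : ℝ)))))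
    (hpow_neg : ∀ k : ℕ, (2:ℝ) ^ (-((k : ℝ) + 1)) = ((2:ℝ)⁻¹) ^ (k + 1))
    (hpow_neg' : ∀ k : ℕ, (2:ℝ) ^ (-(k : ℝ)) = ((2:ℝ)⁻¹) ^ k) :
    {x ∈ Set.Icc (0 : ℝ) 1 | t < |g x|} ⊆ {(0:ℝ)} ∪
      ⋃ k : ℕ, (fun x => (2:ℝ) ^ ((k:ℝ) + 1) * (x - (2:ℝ) ^ (-((k:ℝ) + 1)))) ⁻¹'
        (Ioc 0 1 ∩ {y | t < (2:ℝ) ^ (((k:ℝ) + 1) / p) * |f y|}) := by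
  classical
  intro x hx
  obtain ⟨hxI, hxt⟩ := hx
  by_cases hx0 : x = 0
  · exact Or.inl (by simp [hx0])
  right
  have hx0' : (0:ℝ) < x := lt_of_le_of_ne hxI.1 (Ne.symm hx0)
  have hP : ∃ n : ℕ, ((2:ℝ)⁻¹) ^ (n + 1) < x := by
    obtain ⟨n, hn⟩ := exists_pow_lt_of_lt_one hx0' (by norm_num : (2:ℝ)⁻¹ < 1)
    exact ⟨n, lt_of_le_of_lt
      (pow_le_pow_of_le_one (by norm_num) (by norm_num) (Nat.le_succ n)) hn⟩
  set k := Nat.find hP with hkdef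
  have hk1 : ((2:ℝ)⁻¹) ^ (k + 1) < x := Nat.find_spec hP
  have hk2 : x ≤ ((2:ℝ)⁻¹) ^ k := by
    rcases Nat.eq_zero_or_pos k with hk0 | hkpos
    · rw [hk0, pow_zero]; exact hxI.2
    · obtain ⟨j, hj⟩ := Nat.exists_eq_succ_of_ne_zero hkpos.ne'
      have := Nat.find_min hP (by omega : j < k)
      rw [hj]
      push_neg at this
      exact this
  -- membership in Ioc for hg
  have hmem : x ∈ Set.Ioc ((2:ℝ) ^ (-(((k+1):ℕ) : ℝ))) ((2:ℝ) ^ (-(((k+1):ℕ) : ℝ) + 1)) := by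
    constructor
    · rw [hpow_neg' (k+1)]
      exact_mod_cast hk1
    · rw [show (-(((k+1):ℕ) : ℝ) + 1) = -(k:ℝ) by push_cast; ring, hpow_neg' k]
      exact hk2
  have hgx := hg (k+1) (Nat.le_add_left 1 k) x hmem
  have hcast : (((k+1):ℕ) : ℝ) = (k:ℝ) + 1 := by push_cast; ring
  rw [hcast] at hgx
  -- pieces
  have hA : (0:ℝ) < (2:ℝ) ^ ((k:ℝ) + 1) := Real.rpow_pos_of_pos (by norm_num) _
  have hB : (0:ℝ) < (2:ℝ) ^ (-((k:ℝ) + 1)) := Real.rpow_pos_of_pos (by norm_num) _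
  have hAB : (2:ℝ) ^ ((k:ℝ) + 1) * (2:ℝ) ^ (-((k:ℝ) + 1)) = 1 := by
    rw [← Real.rpow_add (by norm_num : (0:ℝ) < 2), add_neg_cancel, Real.rpow_zero]
  have hxlow : (2:ℝ) ^ (-((k:ℝ) + 1)) < x := by rw [hpow_neg k]; exact hk1
  have hxhigh : x ≤ 2 * (2:ℝ) ^ (-((k:ℝ) + 1)) := by
    rw [hpow_neg k]
    calc x ≤ ((2:ℝ)⁻¹) ^ k := hk2
      _ = 2 * ((2:ℝ)⁻¹) ^ (k + 1) := by rw [pow_succ]; ring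
  refine Set.mem_iUnion.mpr ⟨k, ?_⟩
  refine ⟨⟨?_, ?_⟩, ?_⟩
  · exact mul_pos hA (by linarith)
  · show (2:ℝ) ^ ((k:ℝ) + 1) * (x - (2:ℝ) ^ (-((k:ℝ) + 1))) ≤ 1
    nlinarith [mul_le_mul_of_nonneg_left hxhigh hA.le]
  · show t < (2:ℝ) ^ (((k:ℝ) + 1) / p) * |f ((2:ℝ) ^ ((k:ℝ) + 1) * (x - (2:ℝ) ^ (-((k:ℝ) + 1))))|
    have habs : |g x| = (2:ℝ) ^ (((k:ℝ) + 1) / p)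
        * |f ((2:ℝ) ^ ((k:ℝ) + 1) * (x - (2:ℝ) ^ (-((k:ℝ) + 1))))| := by
      rw [hgx, abs_mul, abs_of_pos (Real.rpow_pos_of_pos (by norm_num) _)]
    rw [← habs]
    exact hxt

theorem stmt2 (p : ℝ) (hp : 1 ≤ p) (f g : ℝ → ℝ) (hf : Measurable f)
    (hfp : MemLp f (ENNReal.ofReal p) (volume.restrict (Set.Icc 0 1)))
    (hg : ∀ k : ℕ, 1 ≤ k → ∀ x ∈ Set.Ioc ((2 : ℝ) ^ (-(k : ℝ))) ((2 : ℝ) ^ (-(k : ℝ) + 1)),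
      g x = (2 : ℝ) ^ ((k : ℝ) / p) * f ((2 : ℝ) ^ (k : ℝ) * (x - (2 : ℝ) ^ (-(k : ℝ)))))
    (t : ℝ) (ht : 0 < t) :
    volume {x ∈ Set.Icc (0 : ℝ) 1 | t < |g x|}
      ≤ ENNReal.ofReal ((2 / (p * ((2 : ℝ) ^ (1 / p) - 1))) * t ^ (-p) *
          ∫ x in Set.Icc (0 : ℝ) 1, |f x| ^ p) := by
  classical
  have hp0 : (0:ℝ) < p := lt_of_lt_of_le one_pos hp
  -- rpow / pow conversions
  have hpow_neg' : ∀ k : ℕ, (2:ℝ) ^ (-(k : ℝ)) = ((2:ℝ)⁻¹) ^ k := by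
    intro k
    rw [Real.rpow_neg (by norm_num), Real.rpow_natCast, inv_pow]
  have hpow_neg : ∀ k : ℕ, (2:ℝ) ^ (-((k : ℝ) + 1)) = ((2:ℝ)⁻¹) ^ (k + 1) := by
    intro k
    rw [show -((k:ℝ)+1) = -(((k+1:ℕ) : ℝ)) by push_cast; ring, hpow_neg']
  have hofReal : ∀ k : ℕ, ENNReal.ofReal ((2:ℝ) ^ (-((k : ℝ) + 1))) = ((2:ℝ≥0∞)⁻¹) ^ (k + 1) := by
    intro k
    rw [hpow_neg k, ENNReal.ofReal_pow (by norm_num)]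
    congr 1
    rw [ENNReal.ofReal_inv_of_pos (by norm_num)]
    norm_num
  -- the rescaled sets
  set S : ℕ → Set ℝ := fun k => {y | t < (2:ℝ) ^ (((k:ℝ) + 1) / p) * |f y|} with hSdef
  have hS : ∀ k, MeasurableSet (S k) :=
    fun k => measurableSet_lt measurable_const ((hf.abs).const_mul _)
  set U : ℕ → Set ℝ := fun k =>
    (fun x => (2:ℝ) ^ ((k:ℝ) + 1) * (x - (2:ℝ) ^ (-((k:ℝ) + 1)))) ⁻¹' (Ioc 0 1 ∩ S k) with hUdef
  -- covering
  have hcover : {x ∈ Set.Icc (0 : ℝ) 1 | t < |g x|} ⊆ {(0:ℝ)} ∪ ⋃ k, U k :=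
    aux_cover p t hp ht f g hg hpow_neg hpow_neg'
  -- volume of U k
  have hUvol : ∀ k : ℕ, volume (U k)
      = ENNReal.ofReal ((2:ℝ) ^ (-((k:ℝ) + 1))) * volume (Ioc 0 1 ∩ S k) :=
    fun k => aux_uvol S hS k
  -- as an integral of an indicator
  have hind : ∀ k : ℕ, ENNReal.ofReal ((2:ℝ) ^ (-((k:ℝ) + 1))) * volume (Ioc 0 1 ∩ S k)
      = ∫⁻ y in Ioc (0:ℝ) 1,
          (S k).indicator (fun _ => ENNReal.ofReal ((2:ℝ) ^ (-((k:ℝ) + 1)))) y := by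
    intro k
    rw [lintegral_indicator_const (hS k), Measure.restrict_apply (hS k), inter_comm]
  -- pointwise bound
  have hpt : ∀ y : ℝ,
      (∑' k : ℕ, (S k).indicator (fun _ => ENNReal.ofReal ((2:ℝ) ^ (-((k:ℝ) + 1)))) y)
        ≤ ENNReal.ofReal (2 * (t ^ (-p) * |f y| ^ p)) :=
    fun y => aux_pt p t hp ht f hofReal y
  -- integrability
  have hint : Integrable (fun x => |f x| ^ p) (volume.restrict (Set.Icc 0 1)) := by
    have h := hfp.integrable_norm_rpow (by simp [ENNReal.ofReal_eq_zero]; linarith)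
      ENNReal.ofReal_ne_top
    simpa [Real.norm_eq_abs, ENNReal.toReal_ofReal hp0.le] using h
  have hnn : (0:ℝ) ≤ ∫ x in Set.Icc (0:ℝ) 1, |f x| ^ p :=
    integral_nonneg fun x => Real.rpow_nonneg (abs_nonneg _) _
  have htp : (0:ℝ) ≤ t ^ (-p) := (Real.rpow_pos_of_pos ht _).le
  -- the constant
  have hC : (2:ℝ) ≤ 2 / (p * ((2:ℝ) ^ (1 / p) - 1)) := by
    have hq1 : 1 / p ≤ 1 := by rw [div_le_one hp0]; linarith
    have hq0 : (0:ℝ) < 1 / p := by positivity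
    have hconv := convexOn_exp.2 (Set.mem_univ (0:ℝ)) (Set.mem_univ (Real.log 2))
      (by linarith : (0:ℝ) ≤ 1 - 1/p) hq0.le (by ring)
    simp only [smul_eq_mul, mul_zero, zero_add, Real.exp_zero,
      Real.exp_log (by norm_num : (0:ℝ) < 2)] at hconv
    have hrw : (2:ℝ) ^ (1 / p) = Real.exp (Real.log 2 * (1 / p)) :=
      Real.rpow_def_of_pos (by norm_num) _
    have h2 : (2:ℝ) ^ (1 / p) ≤ 1 + 1 / p := by
      rw [hrw, mul_comm]
      calc Real.exp (1 / p * Real.log 2) ≤ (1 - 1/p) * 1 + 1/p * 2 := hconv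
        _ = 1 + 1/p := by ring
    have key : p * ((2:ℝ) ^ (1 / p) - 1) ≤ 1 := by
      have hmm := mul_le_mul_of_nonneg_left (by linarith : (2:ℝ) ^ (1/p) - 1 ≤ 1/p) hp0.le
      calc p * ((2:ℝ) ^ (1 / p) - 1) ≤ p * (1/p) := hmm
        _ = 1 := by field_simp
    have h1 : (1:ℝ) < (2:ℝ) ^ (1 / p) :=
      Real.one_lt_rpow_iff_of_pos (by norm_num) |>.mpr (Or.inl ⟨by norm_num, by positivity⟩)
    have hpos : (0:ℝ) < p * ((2:ℝ) ^ (1 / p) - 1) := mul_pos hp0 (by linarith)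
    rw [le_div_iff₀ hpos]
    nlinarith
  calc volume {x ∈ Set.Icc (0 : ℝ) 1 | t < |g x|}
      ≤ volume ({(0:ℝ)} ∪ ⋃ k, U k) := measure_mono hcover
    _ ≤ volume {(0:ℝ)} + volume (⋃ k, U k) := measure_union_le _ _
    _ = volume (⋃ k, U k) := by rw [Real.volume_singleton, zero_add]
    _ ≤ ∑' k, volume (U k) := measure_iUnion_le _
    _ = ∑' k, ∫⁻ y in Ioc (0:ℝ) 1,
          (S k).indicator (fun _ => ENNReal.ofReal ((2:ℝ) ^ (-((k:ℝ) + 1)))) y :=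
        tsum_congr fun k => (hUvol k).trans (hind k)
    _ = ∫⁻ y in Ioc (0:ℝ) 1, ∑' k : ℕ,
          (S k).indicator (fun _ => ENNReal.ofReal ((2:ℝ) ^ (-((k:ℝ) + 1)))) y :=
        (lintegral_tsum fun k => (measurable_const.indicator (hS k)).aemeasurable).symm
    _ ≤ ∫⁻ y in Ioc (0:ℝ) 1, ENNReal.ofReal (2 * (t ^ (-p) * |f y| ^ p)) :=
        lintegral_mono fun y => hpt y
    _ = ENNReal.ofReal (2 * t ^ (-p)) * ∫⁻ y in Ioc (0:ℝ) 1, ENNReal.ofReal (|f y| ^ p) := by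
        rw [← lintegral_const_mul' _ _ ENNReal.ofReal_ne_top]
        refine lintegral_congr fun y => ?_
        rw [← ENNReal.ofReal_mul (by positivity), mul_assoc]
    _ = ENNReal.ofReal (2 * t ^ (-p)) * ∫⁻ y in Set.Icc (0:ℝ) 1, ENNReal.ofReal (|f y| ^ p) := by
        rw [Measure.restrict_congr_set Ioc_ae_eq_Icc]
    _ = ENNReal.ofReal (2 * t ^ (-p)) * ENNReal.ofReal (∫ x in Set.Icc (0:ℝ) 1, |f x| ^ p) := by
        rw [← ofReal_integral_eq_lintegral_ofReal hint
          (Filter.Eventually.of_forall fun x => Real.rpow_nonneg (abs_nonneg _) _)]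
    _ ≤ ENNReal.ofReal ((2 / (p * ((2 : ℝ) ^ (1 / p) - 1))) * t ^ (-p) *
          ∫ x in Set.Icc (0 : ℝ) 1, |f x| ^ p) := by
        rw [← ENNReal.ofReal_mul (by positivity)]
        refine ENNReal.ofReal_le_ofReal ?_
        have h1 : 2 * t ^ (-p) ≤ (2 / (p * ((2:ℝ) ^ (1 / p) - 1))) * t ^ (-p) :=
          mul_le_mul_of_nonneg_right hC htp
        exact mul_le_mul_of_nonneg_right h1 hnn
end

section
/- If (a_n)_{n=0}^∞ is a real sequence with Σ a_n² = ∞, then the series Σ_{n=0}^∞ a_n r_n(t) of Rademacher functions diverges almost everywhere on [0,1]. -/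
/-- The Rademacher function `r_n(t) = sgn (sin (2^{n+1} π t))`. -/
noncomputable def rademacher (n : ℕ) (t : ℝ) : ℝ :=
  Real.sign (Real.sin (2 ^ (n + 1) * Real.pi * t))

open MeasureTheory Filter Real

lemma measurable_realSign : Measurable Real.sign := by
  have : Real.sign = fun r : ℝ => if r < 0 then (-1:ℝ) else if 0 < r then 1 else 0 := rfl
  rw [this]
  exact Measurable.ite (measurableSet_lt measurable_id measurable_const) measurable_const
    (Measurable.ite (measurableSet_lt measurable_const measurable_id) measurable_const
      measurable_const)

lemma measurable_rademacher (n : ℕ) : Measurable (rademacher n) :=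
  measurable_realSign.comp (by fun_prop)

lemma rademacher_abs_le (n : ℕ) (t : ℝ) : |rademacher n t| ≤ 1 := by
  rcases Real.sign_apply_eq (Real.sin (2 ^ (n + 1) * Real.pi * t)) with h | h | h <;>
    simp [rademacher, h]

lemma rademacher_sq_le (n : ℕ) (t : ℝ) : (rademacher n t)^2 ≤ 1 := by
  rcases Real.sign_apply_eq (Real.sin (2 ^ (n + 1) * Real.pi * t)) with h | h | h <;>
    simp [rademacher, h]

/-- a.e. the square is 1 -/
lemma rademacher_sq_ae (n : ℕ) :
    ∀ᵐ t ∂(volume : Measure ℝ), (rademacher n t)^2 = 1 := by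
  have hz : {t : ℝ | Real.sin (2 ^ (n + 1) * Real.pi * t) = 0} ⊆
      Set.range (fun k : ℤ => (k : ℝ) / 2 ^ (n + 1)) := by
    intro t ht
    simp only [Set.mem_setOf_eq, Real.sin_eq_zero_iff] at ht
    obtain ⟨k, hk⟩ := ht
    refine ⟨k, ?_⟩
    have hpi : Real.pi ≠ 0 := Real.pi_ne_zero
    have h2 : (2:ℝ) ^ (n+1) ≠ 0 := by positivity
    have hpp : Real.pi > 0 := Real.pi_pos
    have h2 : (0:ℝ) < 2 ^ (n+1) := by positivity
    field_simp
    nlinarith [hk]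
  have : (volume : Measure ℝ) {t : ℝ | Real.sin (2 ^ (n + 1) * Real.pi * t) = 0} = 0 :=
    measure_mono_null hz (Set.Countable.measure_zero (Set.countable_range _) _)
  filter_upwards [measure_eq_zero_iff_ae_notMem.mp this] with t ht
  have : Real.sin (2 ^ (n + 1) * Real.pi * t) ≠ 0 := ht
  rcases Real.sign_apply_eq_of_ne_zero _ this with h | h <;> simp [rademacher, h]


-- value of rademacher on dyadic intervals
lemma rademacher_eq_on_dyadic (m n k : ℕ) (hn : n ≤ m) {t : ℝ}
    (ht : t ∈ Set.Ioo ((k : ℝ) / 2 ^ (m+1)) ((k+1 : ℕ) / 2 ^ (m+1))) :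
    rademacher n t = (-1 : ℝ) ^ (k / 2 ^ (m - n)) := by
  set d := m - n with hd
  set j := k / 2 ^ d with hj
  set x := 2 ^ (n+1) * t with hx
  have h2 : (0:ℝ) < 2 ^ (m+1) := by positivity
  have h2d : (0:ℝ) < 2 ^ d := by positivity
  have hpow : (2:ℝ) ^ (m+1) = 2 ^ (n+1) * 2 ^ d := by
    rw [← pow_add]; congr 1; omega
  have hxl : (k : ℝ) / 2 ^ d < x := by
    have := ht.1
    rw [hpow] at this
    rw [div_lt_iff₀ h2d]
    have h2n : (0:ℝ) < 2 ^ (n+1) := by positivity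
    rw [div_lt_iff₀ (by positivity)] at this
    nlinarith
  have hxr : x < ((k : ℝ) + 1) / 2 ^ d := by
    have := ht.2
    rw [hpow] at this
    rw [lt_div_iff₀ h2d]
    rw [lt_div_iff₀ (by positivity)] at this
    push_cast at this ⊢
    nlinarith
  -- j ≤ k/2^d and (k+1)/2^d ≤ j+1
  have hjl : (j : ℝ) ≤ (k : ℝ) / 2 ^ d := by
    rw [le_div_iff₀ h2d]
    have : j * 2 ^ d ≤ k := Nat.div_mul_le_self k (2 ^ d)
    exact_mod_cast this
  have hjr : ((k : ℝ) + 1) / 2 ^ d ≤ (j : ℝ) + 1 := by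
    rw [div_le_iff₀ h2d]
    have : k + 1 ≤ (j + 1) * 2 ^ d := by
      have h1 : k % 2 ^ d < 2 ^ d := Nat.mod_lt _ (by positivity)
      have h2 : 2 ^ d * j + k % 2 ^ d = k := by rw [hj]; exact Nat.div_add_mod k (2^d)
      nlinarith
    calc ((k:ℝ) + 1) ≤ ((j:ℝ) + 1) * 2 ^ d := by exact_mod_cast this
    _ = _ := by ring
  have hxj : x - j ∈ Set.Ioo (0:ℝ) 1 := by
    constructor
    · linarith [lt_of_le_of_lt hjl hxl]
    · linarith [lt_of_lt_of_le hxr hjr]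
  have hsin : Real.sin (2 ^ (n+1) * Real.pi * t) = (-1 : ℝ) ^ j * Real.sin (Real.pi * (x - j)) := by
    have : 2 ^ (n+1) * Real.pi * t = Real.pi * (x - j) + j * Real.pi := by
      rw [hx]; ring
    rw [this, Real.sin_add_nat_mul_pi]
  have hpos : 0 < Real.sin (Real.pi * (x - j)) := by
    apply Real.sin_pos_of_pos_of_lt_pi
    · have := Real.pi_pos; nlinarith [hxj.1]
    · have := Real.pi_pos; nlinarith [hxj.2]
  rw [rademacher, hsin]
  rcases Nat.even_or_odd j with hje | hjo
  · rw [hje.neg_one_pow, one_mul, Real.sign_of_pos hpos]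
  · rw [hjo.neg_one_pow, neg_one_mul, Real.sign_neg, Real.sign_of_pos hpos]


lemma sum_pair_cancel {f : ℕ → ℝ} (hf : ∀ j, f (2*j) + f (2*j+1) = 0) (N : ℕ) :
    ∑ k ∈ Finset.range (2*N), f k = 0 := by
  induction N with
  | zero => simp
  | succ N ih =>
      have : 2 * (N+1) = (2*N + 1) + 1 := by ring
      rw [this, Finset.sum_range_succ, Finset.sum_range_succ, ih]
      have := hf N
      linarith

lemma key_sum (m : ℕ) (s : Finset ℕ) (hms : m ∈ s) (hmax : ∀ n ∈ s, n ≤ m) :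
    ∑ k ∈ Finset.range (2 ^ (m+1)), ∏ n ∈ s, (-1 : ℝ) ^ (k / 2 ^ (m - n)) = 0 := by
  have h2 : 2 ^ (m+1) = 2 * 2 ^ m := by ring
  rw [h2]
  apply sum_pair_cancel
  intro j
  have key : ∏ n ∈ s, (-1 : ℝ) ^ ((2*j+1) / 2 ^ (m - n))
      = - ∏ n ∈ s, (-1 : ℝ) ^ ((2*j) / 2 ^ (m - n)) := by
    rw [← Finset.prod_erase_mul _ _ hms, ← Finset.prod_erase_mul _ _ hms]
    have hm0 : m - m = 0 := Nat.sub_self m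
    have h1 : ((2*j+1) / 2 ^ (m-m)) = 2*j+1 := by rw [hm0]; simp
    have h2 : ((2*j) / 2 ^ (m-m)) = 2*j := by rw [hm0]; simp
    rw [h1, h2]
    have hprod : ∏ n ∈ s.erase m, (-1 : ℝ) ^ ((2*j+1) / 2 ^ (m - n))
        = ∏ n ∈ s.erase m, (-1 : ℝ) ^ ((2*j) / 2 ^ (m - n)) := by
      apply Finset.prod_congr rfl
      intro n hn
      have hnm : n ≠ m := Finset.ne_of_mem_erase hn
      have hnle : n ≤ m := hmax n (Finset.mem_of_mem_erase hn)
      have hd : m - n = (m - n - 1) + 1 := by omega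
      congr 1
      rw [hd, pow_succ, Nat.mul_comm (2 ^ (m-n-1)) 2]
      rw [← Nat.div_div_eq_div_mul, ← Nat.div_div_eq_div_mul]
      congr 1
      omega
    rw [hprod, pow_succ]
    ring
  rw [key]; ring

lemma integrableOn_bdd {f : ℝ → ℝ} (hf : Measurable f) {C : ℝ} (hC : ∀ t, |f t| ≤ C)
    {s : Set ℝ} (hs : volume s < ⊤) : IntegrableOn f s := by
  refine Integrable.mono' (integrableOn_const hs.ne) hf.aestronglyMeasurable.restrict
    (ae_of_all _ hC)

lemma prod_rademacher_abs_le (s : Finset ℕ) (t : ℝ) : |∏ n ∈ s, rademacher n t| ≤ 1 := by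
  rw [Finset.abs_prod]
  exact Finset.prod_le_one (fun n _ => abs_nonneg _) (fun n _ => rademacher_abs_le n t)

lemma measurable_prod_rademacher (s : Finset ℕ) : Measurable (fun t => ∏ n ∈ s, rademacher n t) :=
  Finset.measurable_prod s (fun n _ => measurable_rademacher n)

/-- Integral of a product of rademacher functions over a dyadic interval. -/
lemma integral_prod_rademacher_dyadic (m : ℕ) (s : Finset ℕ) (hmax : ∀ n ∈ s, n ≤ m) (k : ℕ) :
    ∫ t in ((k : ℝ)/2^(m+1))..(((k:ℝ)+1)/2^(m+1)), ∏ n ∈ s, rademacher n t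
      = (∏ n ∈ s, (-1 : ℝ) ^ (k / 2 ^ (m - n))) * (1/2^(m+1)) := by
  set a : ℝ := (k : ℝ)/2^(m+1)
  set b : ℝ := ((k:ℝ)+1)/2^(m+1)
  have h2 : (0:ℝ) < 2 ^ (m+1) := by positivity
  have hab : a ≤ b := by
    unfold a b
    gcongr
    linarith
  have hconst : ∀ t ∈ Set.Ioo a b, (∏ n ∈ s, rademacher n t)
      = ∏ n ∈ s, (-1 : ℝ) ^ (k / 2 ^ (m - n)) := by
    intro t ht
    apply Finset.prod_congr rfl
    intro n hn
    apply rademacher_eq_on_dyadic m n k (hmax n hn)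
    simpa using ht
  have hae : (fun t => ∏ n ∈ s, rademacher n t)
      =ᵐ[volume.restrict (Set.Ioc a b)] (fun _ => ∏ n ∈ s, (-1 : ℝ) ^ (k / 2 ^ (m - n))) := by
    rw [MeasureTheory.Measure.restrict_congr_set MeasureTheory.Ioo_ae_eq_Ioc.symm]
    filter_upwards [ae_restrict_mem measurableSet_Ioo] with t ht using hconst t ht
  rw [intervalIntegral.integral_of_le hab, MeasureTheory.integral_congr_ae hae]
  simp only [MeasureTheory.integral_const]
  rw [measureReal_def, MeasureTheory.Measure.restrict_apply MeasurableSet.univ, Set.univ_inter,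
    Real.volume_Ioc]
  have : b - a = 1/2^(m+1) := by unfold a b; ring
  rw [this, ENNReal.toReal_ofReal (by positivity), smul_eq_mul]
  ring


lemma intervalIntegrable_prod_rademacher (s : Finset ℕ) (x y : ℝ) :
    IntervalIntegrable (fun t => ∏ n ∈ s, rademacher n t) volume x y := by
  rw [intervalIntegrable_iff]
  apply integrableOn_bdd (measurable_prod_rademacher s) (prod_rademacher_abs_le s)
  rw [Set.uIoc, Real.volume_Ioc]
  exact ENNReal.ofReal_lt_top

lemma integral_prod_rademacher (s : Finset ℕ) (hs : s.Nonempty) :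
    ∫ t in Set.Icc (0:ℝ) 1, ∏ n ∈ s, rademacher n t = 0 := by
  set m := s.max' hs with hm
  have hmax : ∀ n ∈ s, n ≤ m := fun n hn => Finset.le_max' s n hn
  have hms : m ∈ s := s.max'_mem hs
  set K := 2 ^ (m+1) with hK
  set a : ℕ → ℝ := fun k => (k : ℝ) / 2 ^ (m+1) with ha
  have hint : ∀ k, k < K → IntervalIntegrable (fun t => ∏ n ∈ s, rademacher n t) volume
      (a k) (a (k+1)) := fun k _ => intervalIntegrable_prod_rademacher s _ _
  have hsum := intervalIntegral.sum_integral_adjacent_intervals hint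
  have ha0 : a 0 = 0 := by simp [ha]
  have haK : a K = 1 := by
    show ((K : ℕ) : ℝ) / 2 ^ (m+1) = 1
    rw [hK]
    push_cast
    field_simp
  rw [ha0, haK] at hsum
  have heval : ∀ k ∈ Finset.range K,
      ∫ t in (a k)..(a (k+1)), ∏ n ∈ s, rademacher n t
        = (∏ n ∈ s, (-1 : ℝ) ^ (k / 2 ^ (m - n))) * (1/2^(m+1)) := by
    intro k _
    have h1 : a (k+1) = ((k:ℝ)+1)/2^(m+1) := by show (((k+1:ℕ)) : ℝ)/_ = _; push_cast; ring
    rw [h1]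
    exact integral_prod_rademacher_dyadic m s hmax k
  rw [Finset.sum_congr rfl heval, ← Finset.sum_mul, key_sum m s hms hmax, zero_mul] at hsum
  rw [MeasureTheory.integral_Icc_eq_integral_Ioc, ← intervalIntegral.integral_of_le zero_le_one]
  exact hsum.symm

/-- Orthonormality of products over distinct finsets. -/
lemma integral_prod_mul_prod_rademacher (A B : Finset ℕ) :
    ∫ t in Set.Icc (0:ℝ) 1, (∏ n ∈ A, rademacher n t) * (∏ n ∈ B, rademacher n t)
      = if A = B then 1 else 0 := by
  have hae : ∀ᵐ t ∂(volume.restrict (Set.Icc (0:ℝ) 1)),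
      (∏ n ∈ A, rademacher n t) * (∏ n ∈ B, rademacher n t)
        = ∏ n ∈ (symmDiff A B), rademacher n t := by
    apply ae_restrict_of_ae
    have hsq : ∀ᵐ t ∂(volume : Measure ℝ), ∀ n ∈ A ∩ B, (rademacher n t)^2 = 1 :=
      (ae_ball_iff (A ∩ B).countable_toSet).2 (fun n _ => rademacher_sq_ae n)
    filter_upwards [hsq] with t ht
    have e1 : (∏ n ∈ A \ B, rademacher n t) * (∏ n ∈ A ∩ B, rademacher n t)
        = ∏ n ∈ A, rademacher n t := by
      rw [← Finset.sdiff_inter_self_left A B]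
      exact Finset.prod_sdiff Finset.inter_subset_left
    have e2 : (∏ n ∈ B \ A, rademacher n t) * (∏ n ∈ A ∩ B, rademacher n t)
        = ∏ n ∈ B, rademacher n t := by
      rw [Finset.inter_comm, ← Finset.sdiff_inter_self_left B A]
      exact Finset.prod_sdiff Finset.inter_subset_left
    have e3 : (∏ n ∈ A ∩ B, rademacher n t) * (∏ n ∈ A ∩ B, rademacher n t)
        = ∏ n ∈ A ∩ B, (rademacher n t)^2 := by
      rw [← Finset.prod_mul_distrib]
      exact Finset.prod_congr rfl (fun n _ => (sq _).symm)
    calc (∏ n ∈ A, rademacher n t) * (∏ n ∈ B, rademacher n t)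
        = ((∏ n ∈ A \ B, rademacher n t) * (∏ n ∈ A ∩ B, rademacher n t))
          * ((∏ n ∈ B \ A, rademacher n t) * (∏ n ∈ A ∩ B, rademacher n t)) := by
          rw [e1, e2]
      _ = ((∏ n ∈ A \ B, rademacher n t) * (∏ n ∈ B \ A, rademacher n t))
          * ((∏ n ∈ A ∩ B, rademacher n t) * (∏ n ∈ A ∩ B, rademacher n t)) := by ring
      _ = (∏ n ∈ A \ B, rademacher n t) * (∏ n ∈ B \ A, rademacher n t) := by
          rw [e3, Finset.prod_congr rfl ht, Finset.prod_const_one, mul_one]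
      _ = ∏ n ∈ symmDiff A B, rademacher n t := by
          rw [symmDiff, Finset.sup_eq_union,
            Finset.prod_union (disjoint_sdiff_sdiff)]
  rw [MeasureTheory.integral_congr_ae hae]
  by_cases hAB : A = B
  · simp only [hAB, symmDiff_self, if_pos rfl]
    simp only [Finset.bot_eq_empty, Finset.prod_empty]
    simp [Real.volume_Icc]
  · rw [if_neg hAB]
    apply integral_prod_rademacher
    rw [Finset.nonempty_iff_ne_empty]
    intro hcon
    exact hAB (by simpa [symmDiff_eq_bot] using hcon)


noncomputable def radMu : Measure ℝ := volume.restrict (Set.Icc (0:ℝ) 1)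

noncomputable def radW (p : ℕ × ℕ) (t : ℝ) : ℝ := rademacher p.1 t * rademacher p.2 t

lemma radMu_Icc : radMu (Set.Icc (0:ℝ) 1) = 1 := by
  rw [radMu, Measure.restrict_apply measurableSet_Icc, Set.inter_self, Real.volume_Icc]
  norm_num

lemma radMu_univ : radMu Set.univ = 1 := by
  rw [radMu, Measure.restrict_apply MeasurableSet.univ, Set.univ_inter, Real.volume_Icc]
  norm_num

instance : IsProbabilityMeasure radMu := ⟨radMu_univ⟩

lemma integrable_radMu_bdd {f : ℝ → ℝ} (hf : Measurable f) {C : ℝ} (hC : ∀ t, |f t| ≤ C) :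
    Integrable f radMu := by
  rw [radMu]
  apply integrableOn_bdd hf hC
  rw [Real.volume_Icc]; exact ENNReal.ofReal_lt_top

lemma measurable_radW (p : ℕ × ℕ) : Measurable (radW p) :=
  (measurable_rademacher p.1).mul (measurable_rademacher p.2)

lemma radW_abs_le (p : ℕ × ℕ) (t : ℝ) : |radW p t| ≤ 1 := by
  rw [radW, abs_mul]
  exact mul_le_one₀ (rademacher_abs_le _ _) (abs_nonneg _) (rademacher_abs_le _ _)

lemma pair_eq_pair {p q : ℕ × ℕ} (hp : p.1 < p.2) (hq : q.1 < q.2)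
    (h : ({p.1, p.2} : Finset ℕ) = {q.1, q.2}) : p = q := by
  have h1 : p.1 ∈ ({q.1, q.2} : Finset ℕ) := h ▸ by simp
  have h2 : p.2 ∈ ({q.1, q.2} : Finset ℕ) := h ▸ by simp
  have h3 : q.1 ∈ ({p.1, p.2} : Finset ℕ) := h ▸ by simp
  have h4 : q.2 ∈ ({p.1, p.2} : Finset ℕ) := h ▸ by simp
  simp only [Finset.mem_insert, Finset.mem_singleton] at h1 h2 h3 h4
  have : p.1 = q.1 ∧ p.2 = q.2 := by omega
  exact Prod.ext this.1 this.2

lemma integral_radW_mul_radW {p q : ℕ × ℕ} (hp : p.1 < p.2) (hq : q.1 < q.2) :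
    ∫ t, radW p t * radW q t ∂radMu = if p = q then 1 else 0 := by
  have hrw : ∀ t, radW p t * radW q t
      = (∏ n ∈ ({p.1, p.2} : Finset ℕ), rademacher n t)
        * (∏ n ∈ ({q.1, q.2} : Finset ℕ), rademacher n t) := by
    intro t
    rw [Finset.prod_pair hp.ne, Finset.prod_pair hq.ne]
    rfl
  rw [show (fun t => radW p t * radW q t) = fun t =>
      (∏ n ∈ ({p.1, p.2} : Finset ℕ), rademacher n t)
        * (∏ n ∈ ({q.1, q.2} : Finset ℕ), rademacher n t) from funext hrw]
  rw [radMu]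
  rw [integral_prod_mul_prod_rademacher]
  by_cases hpq : p = q
  · rw [if_pos hpq, if_pos (by rw [hpq])]
  · rw [if_neg hpq, if_neg ?_]
    intro hcon
    exact hpq (pair_eq_pair hp hq hcon)

/-- Finite Bessel inequality for the orthonormal family `radW`. -/
lemma bessel_radW (φ : ℝ → ℝ) (hφm : Measurable φ) (hφb : ∀ t, |φ t| ≤ 1)
    (P : Finset (ℕ × ℕ)) (hP : ∀ p ∈ P, p.1 < p.2) :
    ∑ p ∈ P, (∫ t, φ t * radW p t ∂radMu)^2 ≤ ∫ t, (φ t)^2 ∂radMu := by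
  set c : ℕ × ℕ → ℝ := fun p => ∫ t, φ t * radW p t ∂radMu with hc
  set S : ℝ → ℝ := fun t => ∑ p ∈ P, c p * radW p t with hS
  have hSm : Measurable S := by
    apply Finset.measurable_sum
    intro p _
    exact (measurable_radW p).const_mul (c p)
  have hSb : ∀ t, |S t| ≤ ∑ p ∈ P, |c p| := by
    intro t
    refine (Finset.abs_sum_le_sum_abs _ _).trans ?_
    apply Finset.sum_le_sum
    intro p _
    rw [abs_mul]
    calc |c p| * |radW p t| ≤ |c p| * 1 := by
          exact mul_le_mul_of_nonneg_left (radW_abs_le p t) (abs_nonneg _)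
      _ = |c p| := mul_one _
  -- integrability facts
  have hint_phi2 : Integrable (fun t => (φ t)^2) radMu := by
    apply integrable_radMu_bdd (hφm.pow_const 2)
    intro t; rw [abs_pow]
    calc |φ t| ^ 2 ≤ 1 ^ 2 := pow_le_pow_left₀ (abs_nonneg _) (hφb t) 2
      _ = 1 := one_pow 2
  have hint_phiS : Integrable (fun t => φ t * S t) radMu := by
    apply integrable_radMu_bdd (hφm.mul hSm) (C := 1 * (∑ p ∈ P, |c p|))
    intro t; rw [Pi.mul_apply, abs_mul]
    exact mul_le_mul (hφb t) (hSb t) (abs_nonneg _) zero_le_one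
  have hint_S2 : Integrable (fun t => (S t)^2) radMu := by
    apply integrable_radMu_bdd (hSm.pow_const 2) (C := (∑ p ∈ P, |c p|)^2)
    intro t; rw [abs_pow]
    exact pow_le_pow_left₀ (abs_nonneg _) (hSb t) 2
  -- the two cross integrals
  have hphiS : ∫ t, φ t * S t ∂radMu = ∑ p ∈ P, (c p)^2 := by
    have : ∀ t, φ t * S t = ∑ p ∈ P, c p * (φ t * radW p t) := by
      intro t; rw [hS, Finset.mul_sum]; apply Finset.sum_congr rfl; intros; ring
    rw [show (fun t => φ t * S t) = fun t => ∑ p ∈ P, c p * (φ t * radW p t) from funext this]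
    rw [integral_finset_sum]
    · apply Finset.sum_congr rfl
      intro p _
      rw [integral_const_mul]
      have : (∫ t, φ t * radW p t ∂radMu) = c p := rfl
      rw [this]; ring
    · intro p _
      apply Integrable.const_mul
      apply integrable_radMu_bdd (hφm.mul (measurable_radW p)) (C := 1)
      intro t; rw [Pi.mul_apply, abs_mul]
      exact mul_le_one₀ (hφb t) (abs_nonneg _) (radW_abs_le p t)
  have hS2 : ∫ t, (S t)^2 ∂radMu = ∑ p ∈ P, (c p)^2 := by
    have hexp : ∀ t, (S t)^2 = ∑ p ∈ P, ∑ q ∈ P, (c p * c q) * (radW p t * radW q t) := by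
      intro t
      rw [hS, sq, Finset.sum_mul_sum]
      apply Finset.sum_congr rfl; intros p _
      apply Finset.sum_congr rfl; intros q _
      ring
    rw [show (fun t => (S t)^2) = fun t =>
        ∑ p ∈ P, ∑ q ∈ P, (c p * c q) * (radW p t * radW q t) from funext hexp]
    rw [integral_finset_sum]
    · have : ∀ p ∈ P, ∫ t, ∑ q ∈ P, (c p * c q) * (radW p t * radW q t) ∂radMu
          = (c p)^2 := by
        intro p hp
        rw [integral_finset_sum]
        · have : ∀ q ∈ P, ∫ t, (c p * c q) * (radW p t * radW q t) ∂radMu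
              = (c p * c q) * (if p = q then 1 else 0) := by
            intro q hq
            rw [integral_const_mul, integral_radW_mul_radW (hP p hp) (hP q hq)]
          rw [Finset.sum_congr rfl this]
          have : ∑ q ∈ P, (c p * c q) * (if p = q then 1 else 0)
              = ∑ q ∈ P, (if p = q then c p * c q else 0) := by
            apply Finset.sum_congr rfl
            intro q _
            by_cases h : p = q <;> simp [h]
          rw [this, Finset.sum_ite_eq P p (fun q => c p * c q), if_pos hp, sq]
        · intro q _
          apply Integrable.const_mul
          apply integrable_radMu_bdd ((measurable_radW p).mul (measurable_radW q)) (C := 1)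
          intro t; rw [Pi.mul_apply, abs_mul]
          exact mul_le_one₀ (radW_abs_le p t) (abs_nonneg _) (radW_abs_le q t)
      rw [Finset.sum_congr rfl this]
    · intro p _
      apply MeasureTheory.integrable_finset_sum
      intro q _
      apply Integrable.const_mul
      apply integrable_radMu_bdd ((measurable_radW p).mul (measurable_radW q)) (C := 1)
      intro t; rw [Pi.mul_apply, abs_mul]
      exact mul_le_one₀ (radW_abs_le p t) (abs_nonneg _) (radW_abs_le q t)
  -- conclude
  have h0 : 0 ≤ ∫ t, (φ t - S t)^2 ∂radMu := integral_nonneg (fun t => sq_nonneg _)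
  have hexp2 : ∫ t, (φ t - S t)^2 ∂radMu
      = ∫ t, (φ t)^2 ∂radMu - 2 * ∑ p ∈ P, (c p)^2 + ∑ p ∈ P, (c p)^2 := by
    have : ∀ t, (φ t - S t)^2 = (φ t)^2 - 2 * (φ t * S t) + (S t)^2 := by intro t; ring
    rw [show (fun t => (φ t - S t)^2) = fun t =>
        (φ t)^2 - 2 * (φ t * S t) + (S t)^2 from funext this]
    have e1 : ∫ t, (φ t ^ 2 - 2 * (φ t * S t)) + S t ^ 2 ∂radMu
        = (∫ t, φ t ^ 2 - 2 * (φ t * S t) ∂radMu) + ∫ t, S t ^ 2 ∂radMu :=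
      integral_add (Integrable.sub hint_phi2 (hint_phiS.const_mul 2)) hint_S2
    have e2 : ∫ t, φ t ^ 2 - 2 * (φ t * S t) ∂radMu
        = (∫ t, φ t ^ 2 ∂radMu) - ∫ t, 2 * (φ t * S t) ∂radMu :=
      integral_sub hint_phi2 (hint_phiS.const_mul 2)
    rw [e1, e2, integral_const_mul, hphiS, hS2]
  rw [hexp2] at h0
  linarith


lemma radW_symm (m n : ℕ) : radW (m, n) = radW (n, m) := by
  funext t; simp [radW, mul_comm]

lemma integral_phi_radW_symm (φ : ℝ → ℝ) (m n : ℕ) :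
    ∫ t, φ t * radW (m, n) t ∂radMu = ∫ t, φ t * radW (n, m) t ∂radMu := by
  rw [radW_symm]

lemma integral_phi_mul_sq_expand (φ : ℝ → ℝ) (hφm : Measurable φ) (hφb : ∀ t, |φ t| ≤ 1)
    (a : ℕ → ℝ) (I : Finset ℕ) :
    ∫ t, φ t * (∑ n ∈ I, a n * rademacher n t)^2 ∂radMu
      = (∫ t, φ t ∂radMu) * (∑ n ∈ I, (a n)^2)
        + 2 * ∑ p ∈ (I ×ˢ I).filter (fun p => p.1 < p.2),
            (a p.1 * a p.2) * (∫ t, φ t * radW p t ∂radMu) := by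
  classical
  set Q := I ×ˢ I with hQ
  set J : ℕ × ℕ → ℝ := fun p => ∫ t, φ t * radW p t ∂radMu with hJ
  -- pointwise expansion
  have hpt : ∀ t, φ t * (∑ n ∈ I, a n * rademacher n t)^2
      = ∑ p ∈ Q, (a p.1 * a p.2) * (φ t * radW p t) := by
    intro t
    show _ = ∑ p ∈ I ×ˢ I, (a p.1 * a p.2) * (φ t * radW p t)
    rw [sq, Finset.sum_mul_sum, Finset.sum_product, Finset.mul_sum]
    apply Finset.sum_congr rfl
    intro m _
    rw [Finset.mul_sum]
    apply Finset.sum_congr rfl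
    intro n _
    show φ t * (a m * rademacher m t * (a n * rademacher n t)) = _
    rw [radW]; ring
  have hint : ∀ p : ℕ × ℕ, Integrable (fun t => φ t * radW p t) radMu := by
    intro p
    apply integrable_radMu_bdd (hφm.mul (measurable_radW p)) (C := 1)
    intro t; rw [Pi.mul_apply, abs_mul]
    exact mul_le_one₀ (hφb t) (abs_nonneg _) (radW_abs_le p t)
  have hstep : ∫ t, φ t * (∑ n ∈ I, a n * rademacher n t)^2 ∂radMu
      = ∑ p ∈ Q, (a p.1 * a p.2) * J p := by
    rw [show (fun t => φ t * (∑ n ∈ I, a n * rademacher n t)^2)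
        = fun t => ∑ p ∈ Q, (a p.1 * a p.2) * (φ t * radW p t) from funext hpt]
    rw [integral_finset_sum]
    · exact Finset.sum_congr rfl (fun p _ => integral_const_mul _ _)
    · exact fun p _ => (hint p).const_mul _
  rw [hstep]
  -- split into diag, lt, gt
  have hsplit1 : ∑ p ∈ Q, (a p.1 * a p.2) * J p
      = ∑ p ∈ Q.filter (fun p => p.1 < p.2), (a p.1 * a p.2) * J p
        + ∑ p ∈ Q.filter (fun p => ¬ p.1 < p.2), (a p.1 * a p.2) * J p :=
    (Finset.sum_filter_add_sum_filter_not Q _ _).symm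
  have hsplit2 : ∑ p ∈ Q.filter (fun p => ¬ p.1 < p.2), (a p.1 * a p.2) * J p
      = ∑ p ∈ Q.filter (fun p => p.1 = p.2), (a p.1 * a p.2) * J p
        + ∑ p ∈ Q.filter (fun p => p.2 < p.1), (a p.1 * a p.2) * J p := by
    rw [← Finset.sum_filter_add_sum_filter_not (Q.filter (fun p => ¬ p.1 < p.2))
      (fun p => p.1 = p.2)]
    congr 1
    · congr 1
      rw [Finset.filter_filter]
      apply Finset.filter_congr
      intro p _
      constructor
      · intro hc; omega
      · intro hc; simp at hc ⊢; omega
    · congr 1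
      rw [Finset.filter_filter]
      apply Finset.filter_congr
      intro p _
      constructor
      · intro hc; simp at hc ⊢; omega
      · intro hc; simp at hc ⊢; omega
  -- diagonal
  have hdiag : ∑ p ∈ Q.filter (fun p => p.1 = p.2), (a p.1 * a p.2) * J p
      = (∫ t, φ t ∂radMu) * (∑ n ∈ I, (a n)^2) := by
    have hbij : ∑ p ∈ Q.filter (fun p => p.1 = p.2), (a p.1 * a p.2) * J p
        = ∑ n ∈ I, (a n * a n) * J (n, n) := by
      apply Finset.sum_nbij' (i := fun p => p.1) (j := fun n => (n, n))
      · intro p hp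
        simp only [Q, Finset.mem_filter, Finset.mem_product] at hp
        exact hp.1.1
      · intro n hn
        simp only [Q, Finset.mem_filter, Finset.mem_product]
        exact ⟨⟨hn, hn⟩, trivial⟩
      · intro p hp
        simp only [Q, Finset.mem_filter, Finset.mem_product] at hp
        exact Prod.ext rfl hp.2
      · intro n _; rfl
      · intro p hp
        simp only [Q, Finset.mem_filter, Finset.mem_product] at hp
        show (a p.1 * a p.2) * J p = (a p.1 * a p.1) * J (p.1, p.1)
        rw [show (p.1, p.1) = p from Prod.ext rfl hp.2, ← hp.2]
    rw [hbij]
    have hJnn : ∀ n : ℕ, J (n, n) = ∫ t, φ t ∂radMu := by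
      intro n
      apply integral_congr_ae
      have hsq : ∀ᵐ t ∂radMu, (rademacher n t)^2 = 1 := by
        rw [radMu]; exact ae_restrict_of_ae (rademacher_sq_ae n)
      filter_upwards [hsq] with t ht
      show φ t * radW (n, n) t = φ t
      rw [radW, ← sq, ht, mul_one]
    rw [Finset.mul_sum]
    apply Finset.sum_congr rfl
    intro n _
    rw [hJnn n, sq]
    ring
  -- gt = lt by swap
  have hswap : ∑ p ∈ Q.filter (fun p => p.2 < p.1), (a p.1 * a p.2) * J p
      = ∑ p ∈ Q.filter (fun p => p.1 < p.2), (a p.1 * a p.2) * J p := by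
    apply Finset.sum_nbij' (i := fun p => Prod.swap p) (j := fun p => Prod.swap p)
    · intro p hp
      simp only [Q, Finset.mem_filter, Finset.mem_product] at hp ⊢
      exact ⟨⟨hp.1.2, hp.1.1⟩, hp.2⟩
    · intro p hp
      simp only [Q, Finset.mem_filter, Finset.mem_product] at hp ⊢
      exact ⟨⟨hp.1.2, hp.1.1⟩, hp.2⟩
    · intro p _; exact Prod.swap_swap p
    · intro p _; exact Prod.swap_swap p
    · intro p hp
      show (a p.1 * a p.2) * J p = (a p.2 * a p.1) * J (p.2, p.1)
      rw [show J (p.2, p.1) = J (p.1, p.2) from integral_phi_radW_symm φ p.2 p.1]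
      ring
  rw [hsplit1, hsplit2, hdiag, hswap]
  ring


open MeasureTheory Filter in
theorem stmt13 (a : ℕ → ℝ) (h : ¬ Summable (fun n => (a n) ^ 2)) :
    ∀ᵐ t ∂(volume.restrict (Set.Icc (0 : ℝ) 1)),
      ¬ ∃ L : ℝ, Tendsto (fun N => ∑ n ∈ Finset.range N, a n * rademacher n t) atTop (nhds L) := by
  classical
  by_contra hcon
  set S : ℕ → ℝ → ℝ := fun N t => ∑ n ∈ Finset.range N, a n * rademacher n t with hSdef
  have hSm : ∀ N, Measurable (S N) := by
    intro N
    apply Finset.measurable_sum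
    intro n _
    exact (measurable_rademacher n).const_mul (a n)
  have hμrad : volume.restrict (Set.Icc (0 : ℝ) 1) = radMu := rfl
  rw [hμrad, ae_iff] at hcon
  simp only [not_not] at hcon
  -- the convergence set
  set E : Set ℝ := {t | ∃ L : ℝ, Tendsto (fun N => S N t) atTop (nhds L)} with hE
  have hEpos : radMu E ≠ 0 := hcon
  -- boundedness sets
  set F : ℕ → Set ℝ := fun M => {t | ∀ N, |S N t| ≤ M} with hF
  have hsub : E ⊆ ⋃ M, F M := by
    rintro t ⟨L, hL⟩
    have hb : BddAbove (Set.range fun N => |S N t|) := (hL.abs).bddAbove_range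
    obtain ⟨C, hC⟩ := hb
    refine Set.mem_iUnion.2 ⟨⌈C⌉₊, fun N => ?_⟩
    exact le_trans (hC (Set.mem_range_self N)) (Nat.le_ceil C)
  have hFMex : ∃ M, radMu (F M) ≠ 0 := by
    by_contra hall
    push_neg at hall
    exact hEpos (measure_mono_null hsub (measure_iUnion_null hall))
  obtain ⟨M, hFM⟩ := hFMex
  have hFmeas : MeasurableSet (F M) := by
    have : F M = ⋂ N, (fun t => S N t) ⁻¹' (Set.Icc (-(M:ℝ)) M) := by
      ext t
      simp only [hF, Set.mem_setOf_eq, Set.mem_iInter, Set.mem_preimage, Set.mem_Icc, abs_le]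
    rw [this]
    exact MeasurableSet.iInter (fun N => (hSm N) measurableSet_Icc)
  set β : ℝ := (radMu (F M)).toReal with hβ
  have hβpos : 0 < β := ENNReal.toReal_pos hFM (measure_ne_top _ _)
  have hβle : β ≤ 1 := by
    rw [hβ]
    rw [show (1:ℝ) = (radMu Set.univ).toReal by rw [radMu_univ]; simp]
    exact ENNReal.toReal_mono (measure_ne_top _ _) (measure_mono (Set.subset_univ _))
  set φ : ℝ → ℝ := (F M).indicator (fun _ => (1:ℝ)) with hφ
  have hφm : Measurable φ := measurable_const.indicator hFmeas
  have hφvals : ∀ t, φ t = 0 ∨ φ t = 1 := by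
    intro t
    by_cases ht : t ∈ F M <;> simp [hφ, Set.indicator_apply, ht]
  have hφb : ∀ t, |φ t| ≤ 1 := by
    intro t; rcases hφvals t with h' | h' <;> rw [h'] <;> norm_num
  have hφint : ∫ t, φ t ∂radMu = β := by
    rw [hφ, hβ]
    exact integral_indicator_one hFmeas
  -- Bessel coefficients
  set c : ℕ × ℕ → ℝ := fun p => ∫ t, φ t * radW p t ∂radMu with hc
  set d : ℕ × ℕ → ℝ := fun p => if p.1 < p.2 then (c p)^2 else 0 with hd
  have hd0 : ∀ p, 0 ≤ d p := by
    intro p; rw [hd]; dsimp only; split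
    · exact sq_nonneg _
    · exact le_rfl
  have hφsqint : ∫ t, (φ t)^2 ∂radMu ≤ 1 := by
    have h1 : ∫ t, (φ t)^2 ∂radMu ≤ ∫ _t, (1:ℝ) ∂radMu := by
      apply integral_mono
      · apply integrable_radMu_bdd (hφm.pow_const 2) (C := 1)
        intro t; rcases hφvals t with h' | h' <;> rw [h'] <;> norm_num
      · exact integrable_const 1
      · intro t; rcases hφvals t with h' | h' <;> simp only [h'] <;> norm_num
    calc ∫ t, (φ t)^2 ∂radMu ≤ ∫ _t, (1:ℝ) ∂radMu := h1
      _ = 1 := by rw [integral_const, measureReal_def, radMu_univ]; simp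
  have hdsum : ∀ u : Finset (ℕ × ℕ), ∑ p ∈ u, d p ≤ 1 := by
    intro u
    have he : ∑ p ∈ u, d p = ∑ p ∈ u.filter (fun p => p.1 < p.2), (c p)^2 := by
      rw [Finset.sum_filter]
    rw [he]
    refine le_trans ?_ hφsqint
    exact bessel_radW φ hφm hφb _ (fun p hp => (Finset.mem_filter.1 hp).2)
  have hdsummable : Summable d := summable_of_sum_le hd0 hdsum
  -- tail smallness
  set δ : ℝ := β / 4 with hδ
  have hδpos : 0 < δ := by positivity
  obtain ⟨s₀, hs₀⟩ := hdsummable.tsum_vanishing (Iio_mem_nhds (by positivity : (0:ℝ) < δ^2))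
  set N₀ : ℕ := s₀.sup (fun p => p.1) + 1 with hN₀
  have htail : ∀ P : Finset (ℕ × ℕ), (∀ p ∈ P, N₀ ≤ p.1) → ∑ p ∈ P, d p < δ^2 := by
    intro P hP
    have hdisj : Disjoint (↑P : Set (ℕ × ℕ)) ↑s₀ := by
      rw [Set.disjoint_left]
      intro p hpP hps₀
      have h1 : N₀ ≤ p.1 := hP p hpP
      have h2 : p.1 ≤ s₀.sup (fun p => p.1) := Finset.le_sup hps₀
      omega
    have := hs₀ (↑P : Set (ℕ × ℕ)) hdisj
    rwa [Finset.tsum_subtype' P d] at this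
  -- the key variance bound
  have hVbound : ∀ N, ∑ n ∈ Finset.Ico N₀ N, (a n)^2 ≤ 8 * (M:ℝ)^2 := by
    intro N
    by_cases hNN : N₀ ≤ N
    swap
    · rw [Finset.Ico_eq_empty (by omega)]
      simp only [Finset.sum_empty]; positivity
    set I : Finset ℕ := Finset.Ico N₀ N with hI
    set V : ℝ := ∑ n ∈ I, (a n)^2 with hV
    have hV0 : 0 ≤ V := Finset.sum_nonneg (fun n _ => sq_nonneg _)
    set Qlt : Finset (ℕ × ℕ) := (I ×ˢ I).filter (fun p => p.1 < p.2) with hQlt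
    set T : ℝ := ∑ p ∈ Qlt, (a p.1 * a p.2) * c p with hT
    -- expansion
    have hexp : ∫ t, φ t * (∑ n ∈ I, a n * rademacher n t)^2 ∂radMu = β * V + 2 * T := by
      rw [integral_phi_mul_sq_expand φ hφm hφb a I, hφint]
    -- upper bound
    have hupper : ∫ t, φ t * (∑ n ∈ I, a n * rademacher n t)^2 ∂radMu ≤ 4 * (M:ℝ)^2 * β := by
      have hptab : ∀ t, φ t * (∑ n ∈ I, a n * rademacher n t)^2 ≤ 4 * (M:ℝ)^2 * φ t := by
        intro t
        by_cases ht : t ∈ F M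
        · have hφt : φ t = 1 := by simp [hφ, Set.indicator_apply, ht]
          rw [hφt, mul_one, one_mul]
          have hIsum : ∑ n ∈ I, a n * rademacher n t = S N t - S N₀ t := by
            rw [hI, hSdef]
            exact Finset.sum_Ico_eq_sub _ hNN
          rw [hIsum]
          have h1 : |S N t| ≤ M := ht N
          have h2 : |S N₀ t| ≤ M := ht N₀
          have h3 : |S N t - S N₀ t| ≤ 2 * M := by
            calc |S N t - S N₀ t| ≤ |S N t| + |S N₀ t| := abs_sub _ _
              _ ≤ 2 * M := by linarith
          calc (S N t - S N₀ t)^2 ≤ (2*(M:ℝ))^2 := sq_le_sq' (by linarith [abs_le.1 h3]) (by linarith [abs_le.1 h3])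
            _ = 4 * (M:ℝ)^2 := by ring
        · have hφt : φ t = 0 := by simp [hφ, Set.indicator_apply, ht]
          rw [hφt, zero_mul, mul_zero]
      have hIL : Integrable (fun t => φ t * (∑ n ∈ I, a n * rademacher n t)^2) radMu := by
        apply integrable_radMu_bdd (hφm.mul ((Finset.measurable_sum I (fun n _ =>
          (measurable_rademacher n).const_mul (a n))).pow_const 2))
          (C := (∑ n ∈ I, |a n|)^2)
        intro t
        rw [Pi.mul_apply, abs_mul, abs_pow]
        calc |φ t| * |∑ n ∈ I, a n * rademacher n t|^2
            ≤ 1 * (∑ n ∈ I, |a n|)^2 := by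
              apply mul_le_mul (hφb t) ?_ (by positivity) zero_le_one
              apply pow_le_pow_left₀ (abs_nonneg _)
              refine (Finset.abs_sum_le_sum_abs _ _).trans ?_
              apply Finset.sum_le_sum
              intro n _
              rw [abs_mul]
              calc |a n| * |rademacher n t| ≤ |a n| * 1 :=
                    mul_le_mul_of_nonneg_left (rademacher_abs_le n t) (abs_nonneg _)
                _ = |a n| := mul_one _
          _ = (∑ n ∈ I, |a n|)^2 := one_mul _
      calc ∫ t, φ t * (∑ n ∈ I, a n * rademacher n t)^2 ∂radMu
          ≤ ∫ t, 4 * (M:ℝ)^2 * φ t ∂radMu := by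
            apply integral_mono hIL ((integrable_radMu_bdd hφm hφb).const_mul _) hptab
        _ = 4 * (M:ℝ)^2 * β := by rw [integral_const_mul, hφint]
    -- bound on T
    have hTbound : |T| ≤ δ * V := by
      have hcs : T^2 ≤ (∑ p ∈ Qlt, (a p.1 * a p.2)^2) * (∑ p ∈ Qlt, (c p)^2) := by
        rw [hT]
        exact Finset.sum_mul_sq_le_sq_mul_sq Qlt _ _
      have h1 : ∑ p ∈ Qlt, (a p.1 * a p.2)^2 ≤ V^2 := by
        calc ∑ p ∈ Qlt, (a p.1 * a p.2)^2
            ≤ ∑ p ∈ I ×ˢ I, (a p.1 * a p.2)^2 := by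
              apply Finset.sum_le_sum_of_subset_of_nonneg (Finset.filter_subset _ _)
              intro p _ _
              exact sq_nonneg _
          _ = V^2 := by
              rw [hV, sq, Finset.sum_mul_sum, Finset.sum_product]
              apply Finset.sum_congr rfl; intro m _
              apply Finset.sum_congr rfl; intro n _
              ring
      have h2 : ∑ p ∈ Qlt, (c p)^2 ≤ δ^2 := by
        have he : ∑ p ∈ Qlt, (c p)^2 = ∑ p ∈ Qlt, d p := by
          apply Finset.sum_congr rfl
          intro p hp
          rw [hd]
          simp only
          rw [if_pos (Finset.mem_filter.1 hp).2]
        rw [he]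
        apply le_of_lt
        apply htail
        intro p hp
        have := (Finset.mem_product.1 (Finset.mem_filter.1 hp).1).1
        exact (Finset.mem_Ico.1 this).1
      have hc2nn : (0:ℝ) ≤ ∑ p ∈ Qlt, (c p)^2 := Finset.sum_nonneg (fun p _ => sq_nonneg _)
      have hT2 : T^2 ≤ (δ * V)^2 := by
        calc T^2 ≤ (∑ p ∈ Qlt, (a p.1 * a p.2)^2) * (∑ p ∈ Qlt, (c p)^2) := hcs
          _ ≤ V^2 * δ^2 := by
              apply mul_le_mul h1 h2 hc2nn (by positivity)
          _ = (δ * V)^2 := by ring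
      have hδV : 0 ≤ δ * V := by positivity
      exact abs_le.2 (abs_le_of_sq_le_sq' hT2 hδV)
    -- combine
    have hlow : β * V - 2 * (δ * V) ≤ β * V + 2 * T := by
      have := (abs_le.1 hTbound).1
      linarith
    have : β * V - 2 * (δ * V) ≤ 4 * (M:ℝ)^2 * β := by
      rw [← hexp] at hlow
      linarith [hupper]
    rw [hδ] at this
    -- β V - βV/2 = βV/2 ≤ 4M²β, so V ≤ 8M²
    have hVle : β * V / 2 ≤ 4 * (M:ℝ)^2 * β := by linarith
    have : V ≤ 8 * (M:ℝ)^2 := by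
      rw [div_le_iff₀ (by norm_num : (0:ℝ) < 2)] at hVle
      nlinarith
    exact this
  -- conclude summability, contradiction
  apply h
  have hshift : Summable (fun k => (a (k + N₀))^2) := by
    apply summable_of_sum_range_le (c := 8 * (M:ℝ)^2) (fun k => sq_nonneg _)
    intro K
    have : ∑ i ∈ Finset.range K, (a (i + N₀))^2 = ∑ n ∈ Finset.Ico N₀ (N₀ + K), (a n)^2 := by
      rw [Finset.sum_Ico_eq_sum_range]
      simp only [Nat.add_sub_cancel_left]
      apply Finset.sum_congr rfl
      intro i _
      rw [Nat.add_comm]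
    rw [this]
    exact hVbound (N₀ + K)
  exact (summable_nat_add_iff N₀).1 hshift
end

section
/- If (a_n)_{n=0}^∞ ∈ ℓ², then the Rademacher series Σ_{n=0}^∞ a_n r_n(t) converges almost everywhere on [0,1]. -/
open MeasureTheory Filter Set

noncomputable def rad (n : ℕ) (t : ℝ) : ℝ := (-1 : ℝ) ^ ⌊(2:ℝ) ^ (n+1) * t⌋

lemma neg_one_zpow_cases (k : ℤ) : (-1:ℝ) ^ k = 1 ∨ (-1:ℝ) ^ k = -1 := by
  rcases Int.even_or_odd k with hk | hk
  · exact Or.inl hk.neg_one_zpow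
  · exact Or.inr hk.neg_one_zpow

lemma rad_cases (n : ℕ) (t : ℝ) : rad n t = 1 ∨ rad n t = -1 := neg_one_zpow_cases _

lemma rad_measurable (n : ℕ) : Measurable (rad n) := by
  have h1 : Measurable fun t : ℝ => ⌊(2:ℝ) ^ (n+1) * t⌋ := (measurable_const_mul _).floor
  exact (measurable_from_top.comp h1 : Measurable fun t => ((-1:ℝ) ^ ⌊(2:ℝ)^(n+1)*t⌋))

lemma abs_rad (n : ℕ) (t : ℝ) : |rad n t| = 1 := by
  rcases rad_cases n t with h | h <;> rw [h] <;> norm_num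

lemma rad_sq (n : ℕ) (t : ℝ) : rad n t * rad n t = 1 := by
  rcases rad_cases n t with h | h <;> rw [h] <;> norm_num

def atomSet (e : ℕ) (k : ℤ) : Set ℝ := Ico ((k:ℝ)/2^e) ((k+1)/2^e)

lemma mem_atom_iff {e : ℕ} {k : ℤ} {t : ℝ} : t ∈ atomSet e k ↔ ⌊(2:ℝ)^e * t⌋ = k := by
  rw [atomSet, mem_Ico, Int.floor_eq_iff, div_le_iff₀ (by positivity), lt_div_iff₀ (by positivity)]
  constructor
  · rintro ⟨h1, h2⟩
    refine ⟨by linarith, by push_cast; linarith⟩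
  · rintro ⟨h1, h2⟩
    refine ⟨by linarith, by push_cast at h2 ⊢; linarith⟩

lemma intOn {f : ℝ → ℝ} (hm : Measurable f) (hb : ∀ t, |f t| ≤ 1) {s : Set ℝ}
    (hs : volume s ≠ ⊤) : IntegrableOn f s volume := by
  haveI : IsFiniteMeasure (volume.restrict s) :=
    ⟨by rwa [Measure.restrict_apply_univ, lt_top_iff_ne_top]⟩
  exact Integrable.mono' (integrable_const 1) hm.aestronglyMeasurable
    (Filter.Eventually.of_forall fun t => by simpa using hb t)

lemma volume_atom (e : ℕ) (k : ℤ) : volume (atomSet e k) = ENNReal.ofReal (1/2^e) := by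
  rw [atomSet, Real.volume_Ico]
  congr 1
  field_simp
  ring

lemma floor_double (x : ℝ) (k : ℤ) : ⌊x⌋ = k ↔ (⌊2*x⌋ = 2*k ∨ ⌊2*x⌋ = 2*k+1) := by
  rw [Int.floor_eq_iff, Int.floor_eq_iff, Int.floor_eq_iff]
  constructor
  · rintro ⟨h1, h2⟩
    rcases lt_or_ge (2*x) (2*k+1) with h | h
    · left; push_cast at *; constructor <;> linarith
    · right; push_cast at *; constructor <;> linarith
  · rintro (⟨h1, h2⟩ | ⟨h1, h2⟩) <;> push_cast at * <;> constructor <;> linarith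

lemma pow_succ_mul (e : ℕ) (t : ℝ) : (2:ℝ)^(e+1) * t = 2 * ((2:ℝ)^e * t) := by ring

lemma atom_union (e : ℕ) (k : ℤ) :
    atomSet (e+1) (2*k) ∪ atomSet (e+1) (2*k+1) = atomSet e k := by
  ext t
  simp only [mem_union, mem_atom_iff, pow_succ_mul]
  exact (floor_double _ k).symm

lemma atom_measurable {e : ℕ} {k : ℤ} : MeasurableSet (atomSet e k) := measurableSet_Ico

lemma atoms_disjoint {e : ℕ} {k l : ℤ} (h : k ≠ l) : Disjoint (atomSet e k) (atomSet e l) := by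
  rw [Set.disjoint_left]
  intro t ht ht'
  rw [mem_atom_iff] at ht ht'
  exact h (ht ▸ ht')

lemma split_integral {f : ℝ → ℝ} (hm : Measurable f) (hb : ∀ t, |f t| ≤ 1) (e : ℕ) (k : ℤ) :
    ∫ t in atomSet e k, f t = (∫ t in atomSet (e+1) (2*k), f t) +
      ∫ t in atomSet (e+1) (2*k+1), f t := by
  rw [← atom_union e k, setIntegral_union (atoms_disjoint (by omega)) measurableSet_Ico
    (intOn hm hb (by rw [volume_atom]; exact ENNReal.ofReal_ne_top))
    (intOn hm hb (by rw [volume_atom]; exact ENNReal.ofReal_ne_top))]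

lemma rad_const_on (n : ℕ) (k : ℤ) {t : ℝ} (ht : t ∈ atomSet (n+1) k) : rad n t = (-1:ℝ)^k := by
  rw [rad, mem_atom_iff.mp ht]

lemma int_atom (m : ℕ) (k : ℤ) :
    ∫ t in atomSet (m+1) k, rad m t = (-1:ℝ)^k / 2^(m+1) := by
  rw [setIntegral_congr_fun atom_measurable (fun t ht => rad_const_on m k ht),
    setIntegral_const, measureReal_def, volume_atom, ENNReal.toReal_ofReal (by positivity)]
  rw [smul_eq_mul]
  ring

lemma int_rad_zero : ∀ (d e m : ℕ) (k : ℤ), e + d = m → ∫ t in atomSet e k, rad m t = 0 := by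
  intro d
  induction d with
  | zero =>
    intro e m k he
    have hem : e = m := by omega
    subst hem
    rw [split_integral (rad_measurable e) (fun t => (abs_rad e t).le)]
    rw [int_atom, int_atom, zpow_add₀ (by norm_num : (-1:ℝ) ≠ 0) (2*k) 1]
    have : (-1:ℝ) ^ (2*k) = 1 := Even.neg_one_zpow ⟨k, by ring⟩
    rw [this]
    field_simp
    ring
  | succ d ih =>
    intro e m k he
    rw [split_integral (rad_measurable m) (fun t => (abs_rad m t).le),
      ih (e+1) m (2*k) (by omega), ih (e+1) m (2*k+1) (by omega), add_zero]

lemma int_radmul_zero : ∀ (d e n m : ℕ) (k : ℤ), e + d = n + 1 → n < m →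
    (∫ t in atomSet e k, rad n t * rad m t) = 0 := by
  have hmeas : ∀ n m : ℕ, Measurable fun t => rad n t * rad m t := fun n m =>
    (rad_measurable n).mul (rad_measurable m)
  have hbd : ∀ (n m : ℕ) t, |rad n t * rad m t| ≤ 1 := fun n m t => by
    rw [abs_mul, abs_rad, abs_rad, one_mul]
  intro d
  induction d with
  | zero =>
    intro e n m k he hnm
    have hem : e = n + 1 := by omega
    subst hem
    have : ∀ t ∈ atomSet (n+1) k, rad n t * rad m t = (-1:ℝ)^k * rad m t := fun t ht => by
      rw [rad_const_on n k ht]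
    rw [setIntegral_congr_fun atom_measurable this, integral_const_mul,
      int_rad_zero (m - (n+1)) (n+1) m k (by omega), mul_zero]
  | succ d ih =>
    intro e n m k he hnm
    rw [split_integral (hmeas n m) (hbd n m), ih (e+1) n m (2*k) (by omega) hnm,
      ih (e+1) n m (2*k+1) (by omega) hnm, add_zero]

lemma atom00 : atomSet 0 0 = Ico (0:ℝ) 1 := by
  simp [atomSet]

lemma restrict_Icc_eq : volume.restrict (Icc (0:ℝ) 1) = volume.restrict (atomSet 0 0) := by
  rw [atom00]
  exact (Measure.restrict_congr_set Ico_ae_eq_Icc).symm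

lemma rad_orthonormal (n m : ℕ) :
    ∫ t in Icc (0:ℝ) 1, rad n t * rad m t = if n = m then 1 else 0 := by
  rw [show (∫ t in Icc (0:ℝ) 1, rad n t * rad m t) = ∫ t in atomSet 0 0, rad n t * rad m t from
    by rw [restrict_Icc_eq]]
  rcases lt_trichotomy n m with hlt | heq | hgt
  · rw [if_neg hlt.ne, int_radmul_zero (n+1) 0 n m 0 (by omega) hlt]
  · subst heq
    rw [if_pos rfl]
    simp_rw [rad_sq]
    rw [setIntegral_const, measureReal_def, volume_atom, ENNReal.toReal_ofReal (by positivity)]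
    norm_num
  · rw [if_neg hgt.ne']
    simp_rw [mul_comm (rad n _) (rad m _)]
    rw [int_radmul_zero (m+1) 0 m n 0 (by omega) hgt]

noncomputable def dF : Filtration ℕ (inferInstance : MeasurableSpace ℝ) where
  seq N := MeasurableSpace.comap (fun t => ⌊(2:ℝ)^N * t⌋) ⊤
  mono' := by
    apply monotone_nat_of_le_succ
    intro N s hs
    obtain ⟨A, -, rfl⟩ := hs
    refine ⟨{j : ℤ | ∃ k ∈ A, j = 2*k ∨ j = 2*k+1}, trivial, ?_⟩
    ext t
    simp only [Set.mem_preimage, Set.mem_setOf_eq]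
    constructor
    · rintro ⟨k, hk, hor⟩
      have := (floor_double ((2:ℝ)^N * t) k).mpr (by rw [← pow_succ_mul]; omega)
      rwa [this]
    · intro hA
      exact ⟨⌊(2:ℝ)^N * t⌋, hA, by
        have := (floor_double ((2:ℝ)^N * t) ⌊(2:ℝ)^N * t⌋).mp rfl
        rw [← pow_succ_mul] at this
        omega⟩
  le' := by
    intro N s hs
    obtain ⟨A, -, rfl⟩ := hs
    exact ((measurable_const_mul _).floor) trivial

lemma rad_sm (n N : ℕ) (h : n < N) : StronglyMeasurable[dF N] (rad n) := by
  have hm : Measurable[dF (n+1)] (rad n) := by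
    intro s hs
    exact ⟨((-1:ℝ) ^ · : ℤ → ℝ) ⁻¹' s, trivial, rfl⟩
  exact (Measurable.stronglyMeasurable hm).mono (dF.mono h)

noncomputable def par (a : ℕ → ℝ) (N : ℕ) (t : ℝ) : ℝ := ∑ n ∈ Finset.range N, a n * rad n t

instance : IsProbabilityMeasure (volume.restrict (Icc (0:ℝ) 1)) :=
  ⟨by simp [Real.volume_Icc]⟩

lemma par_adapted (a : ℕ → ℝ) : StronglyAdapted dF (par a) := by
  intro N
  show StronglyMeasurable[dF N] fun t => ∑ n ∈ Finset.range N, a n * rad n t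
  apply Finset.stronglyMeasurable_fun_sum
  intro n hn
  exact (rad_sm n N (Finset.mem_range.mp hn)).const_mul (a n)

lemma rad_integrableOn (n : ℕ) {s : Set ℝ} (hs : volume s ≠ ⊤) : IntegrableOn (rad n) s volume :=
  intOn (rad_measurable n) (fun t => (abs_rad n t).le) hs

lemma par_integrable (a : ℕ → ℝ) (N : ℕ) : Integrable (par a N) (volume.restrict (Icc (0:ℝ) 1)) := by
  apply integrable_finset_sum
  intro n hn
  exact ((rad_integrableOn n (by simp [Real.volume_Icc])).const_mul (a n))

lemma int_rad_over (N : ℕ) (s : Set ℝ) (hs : MeasurableSet[dF N] s) :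
    ∫ t in s, rad N t ∂(volume.restrict (Icc (0:ℝ) 1)) = 0 := by
  obtain ⟨A, -, rfl⟩ := hs
  set s : Set ℝ := (fun t => ⌊(2:ℝ)^N * t⌋) ⁻¹' A with hsdef
  have hsm : MeasurableSet s := dF.le N s ⟨A, trivial, rfl⟩
  rw [Measure.restrict_restrict hsm,
    Measure.restrict_congr_set ((EventuallyEq.refl _ _).inter Ico_ae_eq_Icc).symm]
  have hcover : s ∩ Ico (0:ℝ) 1 = ⋃ k ∈ Finset.range (2^N), (s ∩ atomSet N (k:ℤ)) := by
    ext t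
    simp only [Set.mem_inter_iff, Set.mem_Ico, Set.mem_iUnion, Finset.mem_range, exists_prop]
    constructor
    · rintro ⟨hts, ht0, ht1⟩
      have h0 : (0:ℝ) ≤ (2:ℝ)^N * t := by positivity
      have h1 : (2:ℝ)^N * t < 2^N := by
        have : (0:ℝ) < 2^N := by positivity
        nlinarith
      refine ⟨⌊(2:ℝ)^N * t⌋.toNat, ?_, hts, mem_atom_iff.mpr ?_⟩
      · have hlt : ⌊(2:ℝ)^N * t⌋ < ((2^N : ℕ) : ℤ) := Int.floor_lt.mpr (by push_cast; linarith)
        have hge : (0:ℤ) ≤ ⌊(2:ℝ)^N * t⌋ := Int.floor_nonneg.mpr h0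
        omega
      · have hge : (0:ℤ) ≤ ⌊(2:ℝ)^N * t⌋ := Int.floor_nonneg.mpr h0
        omega
    · rintro ⟨k, hk, hts, hta⟩
      rw [atomSet, mem_Ico] at hta
      have hp : (0:ℝ) < 2^N := by positivity
      have hkN : ((k:ℤ):ℝ) + 1 ≤ 2^N := by push_cast; exact_mod_cast Nat.cast_le.mpr hk
      refine ⟨hts, le_trans (by positivity) hta.1, lt_of_lt_of_le hta.2 ?_⟩
      rw [div_le_one hp]
      push_cast at hkN ⊢
      linarith
  rw [hcover]
  rw [integral_biUnion_finset (Finset.range (2^N)) (s := fun k : ℕ => s ∩ atomSet N (k:ℤ))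
    (fun k _ => hsm.inter atom_measurable)
    (fun k _ l _ hkl => ((atoms_disjoint (by exact_mod_cast hkl : (k:ℤ) ≠ (l:ℤ))).mono
      Set.inter_subset_right Set.inter_subset_right))
    (fun k _ => (rad_integrableOn N (by rw [volume_atom]; exact ENNReal.ofReal_ne_top)).mono_set
      Set.inter_subset_right)]
  apply Finset.sum_eq_zero
  intro k _
  by_cases hk : ((k:ℤ) ∈ A)
  · have : s ∩ atomSet N (k:ℤ) = atomSet N (k:ℤ) := by
      apply Set.inter_eq_self_of_subset_right
      intro t ht
      rw [hsdef, Set.mem_preimage, mem_atom_iff.mp ht]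
      exact hk
    rw [this]
    exact int_rad_zero 0 N N k rfl
  · have : s ∩ atomSet N (k:ℤ) = ∅ := by
      ext t
      simp only [Set.mem_inter_iff, Set.mem_empty_iff_false, iff_false, not_and]
      intro hts hta
      exact hk (mem_atom_iff.mp hta ▸ hts)
    rw [this]
    simp

lemma radmul_integrableOn (n m : ℕ) {s : Set ℝ} (hs : volume s ≠ ⊤) :
    IntegrableOn (fun t => rad n t * rad m t) s volume :=
  intOn ((rad_measurable n).mul (rad_measurable m))
    (fun t => by rw [Pi.mul_apply, abs_mul, abs_rad, abs_rad, one_mul]) hs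

lemma par_martingale (a : ℕ → ℝ) : Martingale (par a) dF (volume.restrict (Icc (0:ℝ) 1)) := by
  apply martingale_of_setIntegral_eq_succ (par_adapted a) (par_integrable a)
  intro N s hs
  have hsm : MeasurableSet s := dF.le N s hs
  have key : ∫ t in s, rad N t ∂(volume.restrict (Icc (0:ℝ) 1)) = 0 := int_rad_over N s hs
  have hps : ∀ t, par a (N+1) t = par a N t + a N * rad N t := fun t => Finset.sum_range_succ _ _
  calc ∫ t in s, par a N t ∂(volume.restrict (Icc (0:ℝ) 1))
      = (∫ t in s, par a N t ∂(volume.restrict (Icc (0:ℝ) 1))) +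
        a N * ∫ t in s, rad N t ∂(volume.restrict (Icc (0:ℝ) 1)) := by rw [key, mul_zero, add_zero]
    _ = ∫ t in s, (par a N t + a N * rad N t) ∂(volume.restrict (Icc (0:ℝ) 1)) := by
        rw [← integral_const_mul, ← integral_add ((par_integrable a N).integrableOn)
          (((rad_integrableOn N (by simp [Real.volume_Icc])).const_mul (a N)).integrableOn)]
    _ = ∫ t in s, par a (N+1) t ∂(volume.restrict (Icc (0:ℝ) 1)) := by simp_rw [hps]

lemma par_expand (a : ℕ → ℝ) (N : ℕ) (t : ℝ) :
    (par a N t)^2 = ∑ n ∈ Finset.range N, ∑ m ∈ Finset.range N,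
      (a n * a m) * (rad n t * rad m t) := by
  rw [sq, par, Finset.sum_mul_sum]
  exact Finset.sum_congr rfl fun n _ => Finset.sum_congr rfl fun m _ => by ring

lemma second_moment (a : ℕ → ℝ) (N : ℕ) :
    ∫ t in Icc (0:ℝ) 1, (par a N t)^2 = ∑ n ∈ Finset.range N, (a n)^2 := by
  simp_rw [par_expand]
  rw [integral_finset_sum _ (fun n _ => integrable_finset_sum _ (fun m _ =>
    ((radmul_integrableOn n m (by simp [Real.volume_Icc])).const_mul _)))]
  refine Finset.sum_congr rfl fun n hn => ?_
  rw [integral_finset_sum _ (fun m _ =>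
    ((radmul_integrableOn n m (by simp [Real.volume_Icc])).const_mul _))]
  have : ∀ m ∈ Finset.range N, ∫ t in Icc (0:ℝ) 1, (a n * a m) * (rad n t * rad m t) =
      if n = m then a n * a m else 0 := by
    intro m _
    rw [integral_const_mul, rad_orthonormal]
    split_ifs <;> simp
  rw [Finset.sum_congr rfl this, Finset.sum_ite_eq (Finset.range N) n (fun m => a n * a m),
    if_pos hn, sq]

lemma par_sq_integrable (a : ℕ → ℝ) (N : ℕ) :
    Integrable (fun t => (par a N t)^2) (volume.restrict (Icc (0:ℝ) 1)) := by
  simp_rw [par_expand]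
  exact integrable_finset_sum _ (fun n _ => integrable_finset_sum _ (fun m _ =>
    ((radmul_integrableOn n m (by simp [Real.volume_Icc])).const_mul _)))

lemma l1_bound (a : ℕ → ℝ) (h : Summable (fun n => (a n)^2)) (N : ℕ) :
    eLpNorm (par a N) 1 (volume.restrict (Icc (0:ℝ) 1)) ≤
      ENNReal.ofReal ((1 + ∑' n, (a n)^2)/2) := by
  set μ := volume.restrict (Icc (0:ℝ) 1)
  have hint : Integrable (par a N) μ := par_integrable a N
  have hbound : ∫ t, ‖par a N t‖ ∂μ ≤ (1 + ∑' n, (a n)^2)/2 := by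
    have ptw : ∀ t, ‖par a N t‖ ≤ (1 + (par a N t)^2)/2 := fun t => by
      rw [Real.norm_eq_abs]
      nlinarith [sq_nonneg (|par a N t| - 1), sq_abs (par a N t)]
    have h1 : ∫ t, ‖par a N t‖ ∂μ ≤ ∫ t, (1 + (par a N t)^2)/2 ∂μ :=
      integral_mono hint.norm (((integrable_const 1).add (par_sq_integrable a N)).div_const 2) ptw
    have h2 : ∫ t, (1 + (par a N t)^2)/2 ∂μ = (1 + ∫ t, (par a N t)^2 ∂μ)/2 := by
      rw [integral_div, integral_add (integrable_const 1) (par_sq_integrable a N)]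
      simp
      rfl
    have h3 : ∫ t, (par a N t)^2 ∂μ ≤ ∑' n, (a n)^2 := by
      rw [show ∫ t, (par a N t)^2 ∂μ = ∑ n ∈ Finset.range N, (a n)^2 from second_moment a N]
      exact Summable.sum_le_tsum (Finset.range N) (fun i _ => sq_nonneg _) h
    linarith
  rw [eLpNorm_one_eq_lintegral_enorm, ← ofReal_integral_norm_eq_lintegral_enorm hint]
  exact ENNReal.ofReal_le_ofReal hbound

lemma rademacher_eq_rad (n : ℕ) (t : ℝ) (ht : ∀ k : ℤ, (2:ℝ)^(n+1) * t ≠ (k:ℝ)) :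
    rademacher n t = rad n t := by
  set x := (2:ℝ)^(n+1) * t with hx
  set k := ⌊x⌋ with hk
  have h1 : (k:ℝ) < x := lt_of_le_of_ne (Int.floor_le x) (fun hc => ht k hc.symm)
  have h2 : x < (k:ℝ) + 1 := Int.lt_floor_add_one x
  have harg : 2 ^ (n+1) * Real.pi * t = Real.pi * (x - k) + k * Real.pi := by
    rw [hx]; ring
  have hsin : Real.sin (2 ^ (n+1) * Real.pi * t) =
      (-1:ℝ)^k * Real.sin (Real.pi * (x - k)) := by
    rw [harg, Real.sin_add_int_mul_pi]
  have hpos : 0 < Real.sin (Real.pi * (x - k)) := by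
    apply Real.sin_pos_of_pos_of_lt_pi
    · nlinarith [Real.pi_pos]
    · nlinarith [Real.pi_pos]
  rw [rademacher, hsin, rad, ← hx, ← hk]
  rcases Int.even_or_odd k with hpar | hpar
  · rw [hpar.neg_one_zpow, one_mul, Real.sign_of_pos hpos]
  · rw [hpar.neg_one_zpow, neg_one_mul, Real.sign_of_neg (neg_neg_iff_pos.mpr hpos)]

lemma ae_rademacher_eq :
    ∀ᵐ t ∂(volume.restrict (Icc (0:ℝ) 1)), ∀ n, rademacher n t = rad n t := by
  have hnull : volume (⋃ n : ℕ, Set.range (fun k : ℤ => (k:ℝ)/2^(n+1))) = 0 :=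
    measure_iUnion_null fun n => (Set.countable_range _).measure_zero _
  have hnull' : (volume.restrict (Icc (0:ℝ) 1))
      (⋃ n : ℕ, Set.range (fun k : ℤ => (k:ℝ)/2^(n+1))) = 0 :=
    le_antisymm (le_trans (Measure.restrict_le_self _) hnull.le) zero_le
  filter_upwards [measure_eq_zero_iff_ae_notMem.mp hnull'] with t ht n
  apply rademacher_eq_rad
  intro k hc
  apply ht
  refine Set.mem_iUnion.mpr ⟨n, ⟨k, ?_⟩⟩
  show (k:ℝ)/2^(n+1) = t
  rw [← hc]
  field_simp

open MeasureTheory Filter in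
theorem stmt14 (a : ℕ → ℝ) (h : Summable (fun n => (a n) ^ 2)) :
    ∀ᵐ t ∂(volume.restrict (Set.Icc (0 : ℝ) 1)),
      ∃ L : ℝ, Tendsto (fun N => ∑ n ∈ Finset.range N, a n * rademacher n t) atTop (nhds L) := by
  have hconv := (par_martingale a).submartingale.exists_ae_tendsto_of_bdd
    (R := ((1 + ∑' n, (a n)^2)/2).toNNReal)
    (fun N => by simpa [ENNReal.ofReal] using l1_bound a h N)
  filter_upwards [hconv, ae_rademacher_eq] with t ⟨c, hc⟩ heq
  refine ⟨c, ?_⟩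
  have : (fun N => ∑ n ∈ Finset.range N, a n * rademacher n t) = fun N => par a N t := by
    funext N
    exact Finset.sum_congr rfl fun n _ => by rw [heq n]
  rw [this]
  exact hc
end
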